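/- arXiv:1709.06432 — 2 statements merged into one kernel-verified Lean document; each statement's English description precedes it below -/
import Mathlib

section
/- Let L(X) = Σ_{k≥w} a_k X^{-k} be a formal Laurent series over F_p with continued fraction convergents P_h/Q_h and d_h := deg(Q_h). Let m be a positive integer and H an index with d_H ≤ m < d_{H+1}. Then the d_H × m matrix over F_p whose (i,j) entry is a_{i+j-1} (the Hankel matrix with rows (a_i, a_{i+1}, ..., a_{i+m-1}) for i = 1, ..., d_H) has full row rank d_H. -/
open scoped Classical ENNReal
open Polynomial

noncomputable section

namespace KH

/-- The field `F_p((X⁻¹))` of formal Laurent series in `X⁻¹` over `ZMod p`,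
modeled as Hahn series over `ℤ`: the coefficient at `i : ℤ` is the coefficient of `X^{-i}`. -/
abbrev LS (p : ℕ) := HahnSeries ℤ (ZMod p)

/-- The element `X` of `F_p((X⁻¹))` (exponent `-1` in `X⁻¹`). -/
def Xls (p : ℕ) : LS p := HahnSeries.single (-1 : ℤ) 1

/-- `ν(L) = -w` where `w` is the order of `L` (`ν(0) = 0` by convention). -/
def nu {p : ℕ} (L : LS p) : ℤ := -(HahnSeries.order L)

/-- Embedding of polynomials `F_p[X] → F_p((X⁻¹))`, sending `X` to `Xls`. -/
def P2L (p : ℕ) [Fact p.Prime] : Polynomial (ZMod p) →+* LS p :=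
  (Polynomial.aeval (Xls p)).toRingHom

/-- The fractional part `{L} = ∑_{i ≥ 1} a_i X^{-i}`. -/
def frac {p : ℕ} (L : LS p) : LS p where
  coeff i := if 1 ≤ i then L.coeff i else 0
  isPWO_support' := L.isPWO_support'.mono (by
    intro i hi
    by_cases h : (1:ℤ) ≤ i <;> simp [HahnSeries.support, h] at hi ⊢ <;> tauto)

/-- Continued fraction remainders: `cfRem L 0 = L`, `cfRem L (n+1) = 1/{cfRem L n}`. -/
def cfRem {p : ℕ} [Fact p.Prime] (L : LS p) : ℕ → LS p
  | 0 => L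
  | n + 1 => (frac (cfRem L n))⁻¹

/-- The `n`-th continued fraction partial quotient of `L` (as a Laurent series; it is the
polynomial part of the `n`-th remainder). -/
def cfA {p : ℕ} [Fact p.Prime] (L : LS p) (n : ℕ) : LS p :=
  cfRem L n - frac (cfRem L n)

/-- The degree of the `n`-th partial quotient. -/
def degA {p : ℕ} [Fact p.Prime] (L : LS p) (n : ℕ) : ℤ := nu (cfA L n)

/-- Denominators `Q_h` of the convergents of `L`. -/
def cfQ {p : ℕ} [Fact p.Prime] (L : LS p) : ℕ → LS p
  | 0 => 1
  | 1 => cfA L 1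
  | n + 2 => cfA L (n + 2) * cfQ L (n + 1) + cfQ L n

/-- Numerators `P_h` of the convergents of `L`. -/
def cfP {p : ℕ} [Fact p.Prime] (L : LS p) : ℕ → LS p
  | 0 => cfA L 0
  | 1 => cfA L 1 * cfA L 0 + 1
  | n + 2 => cfA L (n + 2) * cfP L (n + 1) + cfP L n

/-- `d_h = deg Q_h`. -/
def dQ {p : ℕ} [Fact p.Prime] (L : LS p) (h : ℕ) : ℤ := nu (cfQ L h)

/-- Evaluation at `X = p` of (the fractional part of) a Laurent series:
`∑_{i ≥ 1} a_i p^{-i}` with digits `a_i ∈ {0, …, p-1}`. -/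
def evalAtP {p : ℕ} (L : LS p) : ℝ :=
  ∑' i : ℕ, ((L.coeff ((i : ℤ) + 1)).val : ℝ) / (p : ℝ) ^ (i + 1)

/-- The polynomial over `F_p` associated with `n ∈ ℕ`, whose coefficients are the
base-`p` digits of `n`. -/
def nPoly (p : ℕ) (n : ℕ) : Polynomial (ZMod p) :=
  ∑ i ∈ Finset.range (n + 1), Polynomial.C ((n / p ^ i % p : ℕ) : ZMod p) * Polynomial.X ^ i

/-- The `n`-th point of the digital Kronecker sequence associated with `L`. -/
def kron (p : ℕ) [Fact p.Prime] (L : LS p) (n : ℕ) : ℝ :=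
  evalAtP (frac (P2L p (nPoly p n) * L))

/-- The `i`-th digit of `n(X)` in base `b(X)`. -/
def haltonDigit (p : ℕ) [Fact p.Prime] (b : Polynomial (ZMod p)) (n i : ℕ) :
    Polynomial (ZMod p) :=
  (nPoly p n /ₘ b ^ i) %ₘ b

/-- Evaluation of a polynomial over `F_p` at `p` (digits in `{0,…,p-1}`). -/
def polyEvalNat (p : ℕ) (a : Polynomial (ZMod p)) : ℕ :=
  ∑ i ∈ Finset.range (a.natDegree + 1), (a.coeff i).val * p ^ i

/-- The `n`-th point of the van der Corput sequence in base `b(X)` over `F_p`. -/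
def vdc (p : ℕ) [Fact p.Prime] (b : Polynomial (ZMod p)) (n : ℕ) : ℝ :=
  ∑' i : ℕ, (polyEvalNat p (haltonDigit p b n i) : ℝ) / (p : ℝ) ^ (b.natDegree * (i + 1))

/-- Number of indices `n < N` with `z n` in the box `∏ [a i, b i)`. -/
def countIn (d : ℕ) (z : ℕ → Fin d → ℝ) (N : ℕ) (a b : Fin d → ℝ) : ℕ :=
  ((Finset.range N).filter fun n => ∀ i, a i ≤ z n i ∧ z n i < b i).card

/-- The (extreme) discrepancy of the first `N` points of `z` in `[0,1)^d`. -/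
def disc (d : ℕ) (z : ℕ → Fin d → ℝ) (N : ℕ) : ℝ :=
  sSup { r | ∃ a b : Fin d → ℝ, (∀ i, 0 ≤ a i ∧ a i ≤ b i ∧ b i ≤ 1) ∧
    r = |(countIn d z N a b : ℝ) / N - ∏ i, (b i - a i)| }

/-- The star discrepancy of the first `N` points of `z` in `[0,1)^d`. -/
def starDisc (d : ℕ) (z : ℕ → Fin d → ℝ) (N : ℕ) : ℝ :=
  sSup { r | ∃ b : Fin d → ℝ, (∀ i, 0 < b i ∧ b i ≤ 1) ∧
    r = |(countIn d z N (fun _ => 0) b : ℝ) / N - ∏ i, b i| }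

/-- The Laurent series `∑_{i ≥ 1} a_{i-1} X^{-i}` associated with a coefficient
sequence `a : ℕ → ZMod p`; this identifies `H = {L : ν(L) < 0}` with `ℕ → ZMod p`. -/
def toLS (p : ℕ) (a : ℕ → ZMod p) : LS p where
  coeff i := if h : 1 ≤ i then a (i - 1).toNat else 0
  isPWO_support' := by
    have : BddBelow {i : ℤ | (if h : 1 ≤ i then a (i - 1).toNat else 0) ≠ 0} := by
      refine ⟨1, fun i hi => ?_⟩
      by_cases h : (1:ℤ) ≤ i
      · exact h
      · simp [h] at hi
    exact (Set.isPWO_iff_isWF.mpr this.wellFoundedOn_lt)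

instance : MeasurableSpace (ZMod p) := ⊤

/-- A `(t, m, s)`-net in base `p`. -/
def IsNet (p t m s : ℕ) (P : Fin (p ^ m) → Fin s → ℝ) : Prop :=
  t ≤ m ∧ ∀ (d a : Fin s → ℕ), (∑ i, d i) = m - t → (∀ i, a i < p ^ d i) →
    (Finset.univ.filter fun n => ∀ i,
      (a i : ℝ) / (p : ℝ) ^ d i ≤ P n i ∧ P n i < ((a i : ℝ) + 1) / (p : ℝ) ^ d i).card = p ^ t

/-- A `(t, s)`-sequence in base `p`. -/
def IsTSeq (p t s : ℕ) (z : ℕ → Fin s → ℝ) : Prop :=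
  ∀ m k : ℕ, t < m → IsNet p t m s fun n => z (k * p ^ m + (n : ℕ))


section Statement4Proof

open HahnSeries

variable {p : ℕ}

private lemma frac_coeff (S : LS p) (i : ℤ) :
    (frac S).coeff i = if 1 ≤ i then S.coeff i else 0 := rfl

private lemma frac_coeff_le (S : LS p) {i : ℤ} (h : i ≤ 0) : (frac S).coeff i = 0 := by
  rw [frac_coeff, if_neg (by omega)]

private lemma frac_coeff_ge (S : LS p) {i : ℤ} (h : 1 ≤ i) : (frac S).coeff i = S.coeff i := by
  rw [frac_coeff, if_pos h]

private lemma frac_zero : frac (0 : LS p) = 0 := by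
  ext i
  rw [frac_coeff, HahnSeries.coeff_zero]
  split <;> rfl

private lemma coeff_finsum {α : Type*} (s : Finset α) (f : α → LS p) (i : ℤ) :
    (∑ a ∈ s, f a).coeff i = ∑ a ∈ s, (f a).coeff i :=
  map_sum (HahnSeries.coeff.addMonoidHom i) f s

private lemma order_eq_of {S : LS p} {o : ℤ} (h1 : S.coeff o ≠ 0)
    (h2 : ∀ i, i < o → S.coeff i = 0) : S ≠ 0 ∧ S.order = o := by
  have hS : S ≠ 0 := fun h => h1 (by simp [h])
  refine ⟨hS, le_antisymm (HahnSeries.order_le_of_coeff_ne_zero h1) ?_⟩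
  by_contra hlt
  push_neg at hlt
  exact (HahnSeries.coeff_order_eq_zero.not.mpr hS) (h2 _ hlt)

private lemma one_le_order_frac {S : LS p} (h : frac S ≠ 0) : 1 ≤ (frac S).order := by
  by_contra hlt
  push_neg at hlt
  exact (HahnSeries.coeff_order_eq_zero.not.mpr h) (frac_coeff_le S (by omega))

private lemma order_add_of_lt {x y : LS p} (hx : x ≠ 0) (hy : y ≠ 0)
    (h : x.order < y.order) : x + y ≠ 0 ∧ (x + y).order = x.order := by
  apply order_eq_of
  · rw [HahnSeries.coeff_add, HahnSeries.coeff_eq_zero_of_lt_order h, add_zero]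
    exact (HahnSeries.coeff_order_eq_zero.not.mpr hx)
  · intro i hi
    rw [HahnSeries.coeff_add, HahnSeries.coeff_eq_zero_of_lt_order hi,
      HahnSeries.coeff_eq_zero_of_lt_order (hi.trans h), zero_add]

/-- "Polynomial-like": all coefficients at positive indices (negative powers of `X`) vanish. -/
private def PL (S : LS p) : Prop := ∀ i : ℤ, 1 ≤ i → S.coeff i = 0

private lemma PL_one : PL (1 : LS p) := fun i hi => by
  rw [HahnSeries.coeff_one, if_neg (by omega)]

private lemma PL_add {S T : LS p} (hS : PL S) (hT : PL T) : PL (S + T) := fun i hi => by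
  rw [HahnSeries.coeff_add, hS i hi, hT i hi, add_zero]

private lemma PL_mul {S T : LS p} [Fact p.Prime] (hS : PL S) (hT : PL T) : PL (S * T) := by
  intro i hi
  rw [HahnSeries.coeff_mul]
  apply Finset.sum_eq_zero
  rintro ⟨j, k⟩ hjk
  rw [Finset.mem_addAntidiagonal] at hjk
  obtain ⟨hj, hk, hsum⟩ := hjk
  exfalso
  rw [HahnSeries.mem_support] at hj hk
  have hj' : j ≤ 0 := by by_contra h; exact hj (hS j (by omega))
  have hk' : k ≤ 0 := by by_contra h; exact hk (hT k (by omega))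
  omega

private lemma PL_sub {S T : LS p} (hS : PL S) (hT : PL T) : PL (S - T) := fun i hi => by
  rw [HahnSeries.coeff_sub, hS i hi, hT i hi, sub_zero]

variable [Fact p.Prime]

private lemma order_inv {S : LS p} (h : S ≠ 0) : (S⁻¹).order = -S.order := by
  have h2 : (S⁻¹ * S).order = 0 := by rw [inv_mul_cancel₀ h, HahnSeries.order_one]
  rw [HahnSeries.order_mul (inv_ne_zero h) h] at h2
  omega

private lemma P2L_apply (f : Polynomial (ZMod p)) : P2L p f = Polynomial.aeval (Xls p) f := rfl

private lemma P2L_single (a : ZMod p) (n : ℕ) :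
    P2L p (Polynomial.C a * Polynomial.X ^ n) = HahnSeries.single (-(n : ℤ)) a := by
  rw [map_mul, map_pow, P2L_apply, P2L_apply, Polynomial.aeval_X, Polynomial.aeval_C]
  rw [HahnSeries.algebraMap_apply',
    show (algebraMap (ZMod p) (PowerSeries (ZMod p))) a = PowerSeries.C a from rfl,
    HahnSeries.ofPowerSeries_C, HahnSeries.C_apply]
  rw [Xls, HahnSeries.single_pow, HahnSeries.single_mul_single]
  norm_num

private lemma P2L_coeff (f : Polynomial (ZMod p)) (i : ℤ) :
    (P2L p f).coeff i = if i ≤ 0 then f.coeff (-i).toNat else 0 := by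
  induction f using Polynomial.induction_on' with
  | add f g hf hg =>
    rw [map_add, HahnSeries.coeff_add, hf, hg, Polynomial.coeff_add]
    split <;> simp
  | monomial n a =>
    have h1 : P2L p (Polynomial.monomial n a) = HahnSeries.single (-(n : ℤ)) a := by
      rw [← Polynomial.C_mul_X_pow_eq_monomial]; exact P2L_single a n
    rw [h1, HahnSeries.coeff_single, Polynomial.coeff_monomial]
    by_cases h : i = -(n : ℤ)
    · rw [if_pos h, if_pos (by omega), if_pos (by omega)]
    · rw [if_neg h]
      split
      · rw [if_neg (by omega)]
      · rfl

private lemma PL_P2L (f : Polynomial (ZMod p)) : PL (P2L p f) := fun i hi => by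
  rw [P2L_coeff, if_neg (by omega)]

private lemma P2L_inj {f : Polynomial (ZMod p)} (h : P2L p f = 0) : f = 0 := by
  ext k
  have h3 := P2L_coeff f (-(k : ℤ))
  rw [h, HahnSeries.coeff_zero, if_pos (by omega)] at h3
  have h4 : ((- -(k : ℤ))).toNat = k := by omega
  rw [h4] at h3
  simp [← h3]

private lemma P2L_order {f : Polynomial (ZMod p)} (hf : f ≠ 0) :
    P2L p f ≠ 0 ∧ (P2L p f).order = -(f.natDegree : ℤ) := by
  apply order_eq_of
  · rw [P2L_coeff, if_pos (by omega)]
    have h4 : (- -(f.natDegree : ℤ)).toNat = f.natDegree := by omega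
    rw [h4]
    exact Polynomial.leadingCoeff_ne_zero.mpr hf
  · intro i hi
    rw [P2L_coeff]
    split
    · exact Polynomial.coeff_eq_zero_of_natDegree_lt (by omega)
    · rfl

private lemma exists_P2L {S : LS p} (hS : PL S) : ∃ f : Polynomial (ZMod p), P2L p f = S := by
  by_cases h0 : S = 0
  · exact ⟨0, by rw [map_zero, h0]⟩
  have hord : S.order ≤ 0 := by
    by_contra h
    exact (HahnSeries.coeff_order_eq_zero.not.mpr h0) (hS S.order (by omega))
  set N : ℕ := (-S.order).toNat with hN
  refine ⟨∑ j ∈ Finset.range (N + 1), Polynomial.C (S.coeff (-(j : ℤ))) * Polynomial.X ^ j, ?_⟩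
  have hcf : ∀ k : ℕ,
      (∑ j ∈ Finset.range (N + 1), Polynomial.C (S.coeff (-(j : ℤ))) * Polynomial.X ^ j).coeff k
      = if k ≤ N then S.coeff (-(k : ℤ)) else 0 := by
    intro k
    rw [Polynomial.finset_sum_coeff]
    simp_rw [Polynomial.coeff_C_mul, Polynomial.coeff_X_pow, mul_ite, mul_one, mul_zero]
    rw [Finset.sum_ite_eq (Finset.range (N + 1)) k (fun j => S.coeff (-(j : ℤ)))]
    simp [Nat.lt_succ_iff]
  ext i
  rw [P2L_coeff]
  split
  · rw [hcf]
    split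
    · congr 1
      omega
    · exact (HahnSeries.coeff_eq_zero_of_lt_order (by omega)).symm
  · exact (hS i (by omega)).symm

variable {L : LS p}

private lemma frac_cfRem_ne (hinf : ∀ h : ℕ, 1 ≤ h → 1 ≤ degA L h) (n : ℕ) :
    frac (cfRem L n) ≠ 0 := by
  intro h
  have h1 : cfA L (n + 1) = 0 := by
    show cfRem L (n + 1) - frac (cfRem L (n + 1)) = 0
    rw [show cfRem L (n + 1) = (frac (cfRem L n))⁻¹ from rfl, h, inv_zero, frac_zero, sub_zero]
  have h2 := hinf (n + 1) (by omega)
  rw [degA, h1, nu, HahnSeries.order_zero] at h2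
  omega

private lemma cfRem_succ_ne (hinf : ∀ h : ℕ, 1 ≤ h → 1 ≤ degA L h) (n : ℕ) :
    cfRem L (n + 1) ≠ 0 :=
  inv_ne_zero (frac_cfRem_ne hinf n)

private lemma order_cfRem_succ (hinf : ∀ h : ℕ, 1 ≤ h → 1 ≤ degA L h) (n : ℕ) :
    (cfRem L (n + 1)).order = -(frac (cfRem L n)).order :=
  order_inv (frac_cfRem_ne hinf n)

private lemma order_cfRem_neg (hinf : ∀ h : ℕ, 1 ≤ h → 1 ≤ degA L h) (n : ℕ) :
    (cfRem L (n + 1)).order ≤ -1 := by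
  rw [order_cfRem_succ hinf n]
  have := one_le_order_frac (frac_cfRem_ne hinf n)
  omega

private lemma cfA_succ (hinf : ∀ h : ℕ, 1 ≤ h → 1 ≤ degA L h) (n : ℕ) :
    cfA L (n + 1) ≠ 0 ∧ (cfA L (n + 1)).order = (cfRem L (n + 1)).order := by
  have hle := order_cfRem_neg hinf n
  have hR := cfRem_succ_ne hinf n
  apply order_eq_of
  · show (cfRem L (n + 1) - frac (cfRem L (n + 1))).coeff _ ≠ 0
    rw [HahnSeries.coeff_sub, frac_coeff_le _ (by omega), sub_zero]
    exact (HahnSeries.coeff_order_eq_zero.not.mpr hR)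
  · intro i hi
    show (cfRem L (n + 1) - frac (cfRem L (n + 1))).coeff i = 0
    rw [HahnSeries.coeff_sub, frac_coeff_le _ (by omega), sub_zero]
    exact HahnSeries.coeff_eq_zero_of_lt_order hi

private lemma order_frac_cfRem (hinf : ∀ h : ℕ, 1 ≤ h → 1 ≤ degA L h) (n : ℕ) :
    (frac (cfRem L n)).order = degA L (n + 1) := by
  rw [degA, nu, (cfA_succ hinf n).2, order_cfRem_succ hinf n, neg_neg]

/-- Partial sums of degrees of partial quotients. -/
private def sdeg (L : LS p) (h : ℕ) : ℤ := ∑ i ∈ Finset.range h, degA L (i + 1)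

private lemma sdeg_succ (n : ℕ) : sdeg L (n + 1) = sdeg L n + degA L (n + 1) :=
  Finset.sum_range_succ _ _

private lemma one_le_degA (hinf : ∀ h : ℕ, 1 ≤ h → 1 ≤ degA L h) (n : ℕ) :
    1 ≤ degA L (n + 1) := hinf (n + 1) (by omega)

private lemma sdeg_nonneg (hinf : ∀ h : ℕ, 1 ≤ h → 1 ≤ degA L h) (n : ℕ) :
    0 ≤ sdeg L n :=
  Finset.sum_nonneg fun i _ => by have := one_le_degA hinf i; omega

private lemma cfQ_fact (hinf : ∀ h : ℕ, 1 ≤ h → 1 ≤ degA L h) :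
    ∀ h : ℕ, cfQ L h ≠ 0 ∧ (cfQ L h).order = -(sdeg L h)
  | 0 => ⟨one_ne_zero, by rw [show cfQ L 0 = 1 from rfl, HahnSeries.order_one]; simp [sdeg]⟩
  | 1 => by
      have h1 := cfA_succ hinf 0
      refine ⟨h1.1, ?_⟩
      rw [show cfQ L 1 = cfA L 1 from rfl, h1.2, order_cfRem_succ hinf 0,
        order_frac_cfRem hinf 0]
      simp [sdeg]
  | (n + 2) => by
      obtain ⟨hQ1, hO1⟩ := cfQ_fact hinf (n + 1)
      obtain ⟨hQ0, hO0⟩ := cfQ_fact hinf n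
      obtain ⟨hA, hOA⟩ := cfA_succ hinf (n + 1)
      have hAo : (cfA L (n + 2)).order = -(degA L (n + 2)) := by
        rw [hOA, order_cfRem_succ hinf (n + 1), order_frac_cfRem hinf (n + 1)]
      have hne : cfA L (n + 2) * cfQ L (n + 1) ≠ 0 := mul_ne_zero hA hQ1
      have hmul : (cfA L (n + 2) * cfQ L (n + 1)).order = -(degA L (n + 2)) - sdeg L (n + 1) := by
        rw [HahnSeries.order_mul hA hQ1, hAo, hO1]; ring
      have hlt : (cfA L (n + 2) * cfQ L (n + 1)).order < (cfQ L n).order := by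
        rw [hmul, hO0]
        have d1 : 1 ≤ degA L (n + 2) := hinf (n + 2) (by omega)
        have d2 : 1 ≤ degA L (n + 1) := hinf (n + 1) (by omega)
        have hs : sdeg L (n + 1) = sdeg L n + degA L (n + 1) := sdeg_succ n
        omega
      obtain ⟨hne2, ho2⟩ := order_add_of_lt hne hQ0 hlt
      refine ⟨hne2, ?_⟩
      have e2 : degA L (n + 1 + 1) = degA L (n + 2) := rfl
      have s1 : sdeg L (n + 2) = sdeg L (n + 1) + degA L (n + 1 + 1) := sdeg_succ (n + 1)
      rw [show cfQ L (n + 2) = cfA L (n + 2) * cfQ L (n + 1) + cfQ L n from rfl, ho2, hmul]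
      omega

private lemma dQ_eq (hinf : ∀ h : ℕ, 1 ≤ h → 1 ≤ degA L h) (h : ℕ) :
    dQ L h = sdeg L h := by
  rw [dQ, nu, (cfQ_fact hinf h).2, neg_neg]

private lemma PL_cfA (n : ℕ) : PL (cfA L n) := by
  intro i hi
  show (cfRem L n - frac (cfRem L n)).coeff i = 0
  rw [HahnSeries.coeff_sub, frac_coeff_ge _ hi, sub_self]

private lemma PL_cfQ : ∀ n : ℕ, PL (cfQ L n)
  | 0 => PL_one
  | 1 => PL_cfA 1
  | (n + 2) => PL_add (PL_mul (PL_cfA (n + 2)) (PL_cfQ (n + 1))) (PL_cfQ n)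

private lemma PL_cfP : ∀ n : ℕ, PL (cfP L n)
  | 0 => PL_cfA 0
  | 1 => PL_add (PL_mul (PL_cfA 1) (PL_cfA 0)) PL_one
  | (n + 2) => PL_add (PL_mul (PL_cfA (n + 2)) (PL_cfP (n + 1))) (PL_cfP n)

private lemma E_eq (hinf : ∀ h : ℕ, 1 ≤ h → 1 ≤ degA L h) :
    ∀ h : ℕ, cfQ L h * L - cfP L h
      = (-1) ^ h * ∏ i ∈ Finset.range (h + 1), frac (cfRem L i)
  | 0 => by
      show (1 : LS p) * L - (cfRem L 0 - frac (cfRem L 0)) = _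
      rw [show cfRem L 0 = L from rfl, Finset.prod_range_one,
        show cfRem L 0 = L from rfl]
      ring
  | 1 => by
      have h0 : frac (cfRem L 0) ≠ 0 := frac_cfRem_ne hinf 0
      show cfA L 1 * L - (cfA L 1 * cfA L 0 + 1) = _
      rw [show cfA L 1 = (frac (cfRem L 0))⁻¹ - frac (cfRem L 1) from rfl,
        show cfA L 0 = L - frac (cfRem L 0) from rfl,
        Finset.prod_range_succ, Finset.prod_range_one,
        show cfRem L 0 = L from rfl] at *
      field_simp
      ring
  | (n + 2) => by
      have e1 := E_eq hinf (n + 1)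
      have e0 := E_eq hinf n
      have hF1 : frac (cfRem L (n + 1)) ≠ 0 := frac_cfRem_ne hinf (n + 1)
      have hrec : cfQ L (n + 2) * L - cfP L (n + 2)
          = cfA L (n + 2) * (cfQ L (n + 1) * L - cfP L (n + 1)) + (cfQ L n * L - cfP L n) := by
        show (cfA L (n + 2) * cfQ L (n + 1) + cfQ L n) * L
            - (cfA L (n + 2) * cfP L (n + 1) + cfP L n) = _
        ring
      rw [hrec, e1, e0,
        show cfA L (n + 2) = (frac (cfRem L (n + 1)))⁻¹ - frac (cfRem L (n + 2)) from rfl,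
        show (n + 1 + 1 : ℕ) = n + 2 from rfl,
        Finset.prod_range_succ (n := n + 2), Finset.prod_range_succ (n := n + 1)]
      field_simp
      ring
  termination_by h => h

private lemma order_prod_frac (hinf : ∀ h : ℕ, 1 ≤ h → 1 ≤ degA L h) (n : ℕ) :
    (∏ i ∈ Finset.range n, frac (cfRem L i)) ≠ 0 ∧
      (∏ i ∈ Finset.range n, frac (cfRem L i)).order = sdeg L n := by
  induction n with
  | zero => exact ⟨one_ne_zero, by rw [Finset.prod_range_zero, HahnSeries.order_one]; simp [sdeg]⟩
  | succ k ih =>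
    constructor
    · rw [Finset.prod_range_succ]
      exact mul_ne_zero ih.1 (frac_cfRem_ne hinf k)
    · rw [Finset.prod_range_succ, HahnSeries.order_mul ih.1 (frac_cfRem_ne hinf k), ih.2,
        order_frac_cfRem hinf k, sdeg_succ]

private lemma E_order (hinf : ∀ h : ℕ, 1 ≤ h → 1 ≤ degA L h) (h : ℕ) :
    (cfQ L h * L - cfP L h) ≠ 0 ∧ (cfQ L h * L - cfP L h).order = sdeg L (h + 1) := by
  rw [E_eq hinf h]
  have hp := order_prod_frac hinf (h + 1)
  have hu : ((-1 : LS p) ^ h) ≠ 0 := pow_ne_zero _ (neg_ne_zero.mpr one_ne_zero)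
  refine ⟨mul_ne_zero hu hp.1, ?_⟩
  rw [HahnSeries.order_mul hu hp.1, hp.2]
  have h1 : ((-1 : LS p) ^ h).order = 0 := by
    rw [HahnSeries.order_pow, HahnSeries.order_neg, HahnSeries.order_one, smul_zero]
  rw [h1, zero_add]

private lemma det_id (L : LS p) : ∀ h : ℕ,
    cfP L (h + 1) * cfQ L h - cfP L h * cfQ L (h + 1) = (-1) ^ h
  | 0 => by
      show (cfA L 1 * cfA L 0 + 1) * 1 - cfA L 0 * cfA L 1 = (-1 : LS p) ^ 0
      ring
  | (n + 1) => by
      have ih := det_id L n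
      show (cfA L (n + 2) * cfP L (n + 1) + cfP L n) * cfQ L (n + 1)
          - cfP L (n + 1) * (cfA L (n + 2) * cfQ L (n + 1) + cfQ L n) = _
      have h1 : (cfA L (n + 2) * cfP L (n + 1) + cfP L n) * cfQ L (n + 1)
          - cfP L (n + 1) * (cfA L (n + 2) * cfQ L (n + 1) + cfQ L n)
          = -(cfP L (n + 1) * cfQ L n - cfP L n * cfQ L (n + 1)) := by ring
      rw [h1, ih, pow_succ]
      ring

end Statement4Proof


/-- For a Laurent series `L` with convergent denominators of degree
`d_h = deg Q_h` and `d_H ≤ m < d_{H+1}`, the `d_H × m` Hankel matrix with rows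
`(a_i, a_{i+1}, …, a_{i+m-1})`, `i = 1, …, d_H`, built from the coefficients `a_k` of
`X^{-k}` in `L`, has full row rank `d_H`. -/
theorem statement4 (p : ℕ) [Fact p.Prime] (L : LS p)
    (hinf : ∀ h : ℕ, 1 ≤ h → 1 ≤ degA L h)
    (m : ℕ) (hm : 1 ≤ m) (H : ℕ)
    (hlo : dQ L H ≤ (m : ℤ)) (hhi : (m : ℤ) < dQ L (H + 1)) :
    LinearIndependent (ZMod p)
      (fun i : Fin (dQ L H).toNat => fun j : Fin m =>
        L.coeff ((i : ℤ) + 1 + (j : ℤ))) := by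
  have hterm : ∀ (j : ℕ) (r : ZMod p) (k : ℤ),
      (HahnSeries.single (-(j : ℤ)) r * L).coeff k = r * L.coeff (k + j) := by
    intro j r k
    conv_lhs => rw [show k = (k + j) + -(j : ℤ) by ring]
    rw [HahnSeries.coeff_single_mul_add]
  have hinj : ∀ a b : Polynomial (ZMod p), P2L p a = P2L p b → a = b := by
    intro a b hab
    have h2 : P2L p (a - b) = 0 := by rw [map_sub, hab, sub_self]
    exact sub_eq_zero.mp (P2L_inj h2)
  rcases Nat.eq_zero_or_pos H with hH0 | hHpos
  · subst hH0
    rw [Fintype.linearIndependent_iff]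
    intro c hc i
    exfalso
    have h0 : dQ L 0 = 0 := by
      rw [dQ, nu, show cfQ L 0 = 1 from rfl, HahnSeries.order_one, neg_zero]
    have h2 : (dQ L 0).toNat = 0 := by rw [h0]; rfl
    have h1 := i.2
    omega
  · have hdQH : dQ L H = sdeg L H := dQ_eq hinf H
    have hdQH1 : dQ L (H + 1) = sdeg L (H + 1) := dQ_eq hinf (H + 1)
    have hDnn : 0 ≤ dQ L H := by rw [hdQH]; exact sdeg_nonneg hinf H
    rw [Fintype.linearIndependent_iff]
    set D : ℕ := (dQ L H).toNat with hD
    have hDz : (D : ℤ) = dQ L H := Int.toNat_of_nonneg hDnn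
    intro c hc
    set c' : ℕ → ZMod p := fun j => if h : j < D then c ⟨j, h⟩ else 0 with hc'
    set f : Polynomial (ZMod p) :=
      ∑ j ∈ Finset.range D, Polynomial.C (c' j) * Polynomial.X ^ j with hf
    have fcoeff : ∀ k : ℕ, f.coeff k = if k < D then c' k else 0 := by
      intro k
      rw [hf, Polynomial.finset_sum_coeff]
      simp_rw [Polynomial.coeff_C_mul, Polynomial.coeff_X_pow, mul_ite, mul_one, mul_zero]
      rw [Finset.sum_ite_eq (Finset.range D) k c']
      simp [Finset.mem_range]
    have hPfL : ∀ k : ℤ, (P2L p f * L).coeff k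
        = ∑ j ∈ Finset.range D, c' j * L.coeff (k + j) := by
      intro k
      rw [hf, map_sum, Finset.sum_mul, coeff_finsum]
      apply Finset.sum_congr rfl
      intro j _
      rw [P2L_single, hterm]
    have hPfL2 : ∀ k : ℤ, (P2L p f * L).coeff k = ∑ i : Fin D, c i * L.coeff (k + i) := by
      intro k
      rw [hPfL k, ← Fin.sum_univ_eq_sum_range (fun j => c' j * L.coeff (k + j)) D]
      apply Finset.sum_congr rfl
      intro i _
      congr 1
      simp [hc', i.isLt]
    have hvan : ∀ k : ℤ, k < (m : ℤ) + 1 → (frac (P2L p f * L)).coeff k = 0 := by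
      intro k hk
      rcases le_or_gt 1 k with h1 | h1
      · rw [frac_coeff_ge _ h1, hPfL2 k]
        have hj : (k - 1).toNat < m := by omega
        have h2 := congrFun hc ⟨(k - 1).toNat, hj⟩
        simp only [Finset.sum_apply, Pi.smul_apply, smul_eq_mul, Pi.zero_apply] at h2
        rw [← h2]
        apply Finset.sum_congr rfl
        intro x _
        congr 1
        have h3 : (((⟨(k - 1).toNat, hj⟩ : Fin m)) : ℤ) = ((k - 1).toNat : ℤ) := rfl
        rw [h3]
        congr 1
        omega
      · exact frac_coeff_le _ (by omega)
    obtain ⟨qH, hqH⟩ := exists_P2L (PL_cfQ (L := L) H)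
    obtain ⟨pH, hpH⟩ := exists_P2L (PL_cfP (L := L) H)
    obtain ⟨q', hq'⟩ := exists_P2L (PL_cfQ (L := L) (H - 1))
    obtain ⟨p', hp'⟩ := exists_P2L (PL_cfP (L := L) (H - 1))
    have hQne : cfQ L H ≠ 0 := (cfQ_fact hinf H).1
    have hQo : (cfQ L H).order = -(dQ L H) := by rw [(cfQ_fact hinf H).2, hdQH]
    have hf0 : f = 0 := by
      by_contra hfne
      have hdeg : f.natDegree < D := by
        by_contra hge
        push_neg at hge
        have hl := Polynomial.leadingCoeff_ne_zero.mpr hfne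
        rw [Polynomial.leadingCoeff, fcoeff, if_neg (by omega)] at hl
        exact hl rfl
      set S := frac (P2L p f * L) with hSdef
      have hSord : S ≠ 0 → (m : ℤ) + 1 ≤ S.order := by
        intro hS0
        by_contra hlt
        push_neg at hlt
        exact (HahnSeries.coeff_order_eq_zero.not.mpr hS0) (hvan _ hlt)
      have hPLG : PL (P2L p f * L - S) := by
        intro i hi
        rw [HahnSeries.coeff_sub, hSdef, frac_coeff_ge _ hi, sub_self]
      obtain ⟨g, hg⟩ := exists_P2L hPLG
      have hE := E_order hinf H
      have hEne := hE.1
      have hEord : (m : ℤ) + 1 ≤ (cfQ L H * L - cfP L H).order := by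
        rw [hE.2, ← hdQH1]; omega
      have hfPne : P2L p f ≠ 0 := fun h => hfne (P2L_inj h)
      have hfPord : (P2L p f).order = -(f.natDegree : ℤ) := (P2L_order hfne).2
      have hdelta : P2L p (f * pH) - P2L p (g * qH)
          = S * cfQ L H - P2L p f * (cfQ L H * L - cfP L H) := by
        rw [map_mul, map_mul, hpH, hqH, hg]
        ring
      have hzero : P2L p (f * pH) - P2L p (g * qH) = 0 := by
        ext i
        rw [HahnSeries.coeff_zero]
        rcases le_or_gt 1 i with h1 | h1
        · rw [HahnSeries.coeff_sub, PL_P2L _ i h1, PL_P2L _ i h1, sub_zero]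
        · rw [hdelta, HahnSeries.coeff_sub]
          have hc1 : (S * cfQ L H).coeff i = 0 := by
            by_cases hS0 : S = 0
            · rw [hS0, zero_mul, HahnSeries.coeff_zero]
            · apply HahnSeries.coeff_eq_zero_of_lt_order
              rw [HahnSeries.order_mul hS0 hQne, hQo]
              have := hSord hS0
              omega
          have hc2 : (P2L p f * (cfQ L H * L - cfP L H)).coeff i = 0 := by
            apply HahnSeries.coeff_eq_zero_of_lt_order
            rw [HahnSeries.order_mul hfPne hEne, hfPord]
            omega
          rw [hc1, hc2, sub_zero]
      have heq : f * pH = g * qH := by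
        apply hinj
        rw [sub_eq_zero] at hzero
        exact hzero
      have hdet0 := det_id L (H - 1)
      rw [show H - 1 + 1 = H from by omega] at hdet0
      have hdet : pH * q' - p' * qH = (-1) ^ (H - 1) := by
        apply hinj
        rw [map_sub, map_mul, map_mul, hpH, hq', hp', hqH, hdet0, map_pow, map_neg, map_one]
      have hcop : IsCoprime qH pH := by
        refine ⟨-((-1) ^ (H - 1)) * p', ((-1) ^ (H - 1)) * q', ?_⟩
        have hsq : ((-1 : Polynomial (ZMod p)) ^ (H - 1)) * ((-1) ^ (H - 1)) = 1 := by
          rw [← mul_pow]; norm_num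
        have hr : -((-1 : Polynomial (ZMod p)) ^ (H - 1)) * p' * qH
            + ((-1) ^ (H - 1)) * q' * pH
            = ((-1) ^ (H - 1)) * (pH * q' - p' * qH) := by ring
        rw [hr, hdet, hsq]
      have hdvd : qH ∣ f := hcop.dvd_of_dvd_mul_right ⟨g, by rw [heq]; ring⟩
      have hqHne : qH ≠ 0 := by
        intro h
        rw [h, map_zero] at hqH
        exact hQne hqH.symm
      have hqdeg : (qH.natDegree : ℤ) = dQ L H := by
        have h5 := (P2L_order hqHne).2
        rw [hqH, hQo] at h5
        omega
      have hfd := Polynomial.natDegree_le_of_dvd hdvd hfne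
      omega
    intro i
    have h6 := fcoeff i
    rw [hf0, Polynomial.coeff_zero, if_pos i.isLt] at h6
    have h7 : c' i = c i := by simp [hc', i.isLt]
    rw [h7] at h6
    exact h6.symm

end KH
end
end

section
/- Let p be prime and let b_1(X), ..., b_t(X) ∈ F_p[X] be monic nonconstant pairwise coprime polynomials with deg(b_j) = e_j. Let (y_n)_{n≥0} be the Halton sequence in bases b_1(X), ..., b_t(X). Then for nonnegative integers d_1, ..., d_t and 0 ≤ a_j < p^{e_j d_j}, the point y_n lies in the interval Π_{j=1}^t [a_j / p^{e_j d_j}, (a_j+1)/p^{e_j d_j}) if and only if n(X) ≡ R(X) (mod Π_{j=1}^t b_j(X)^{d_j}) for a unique residue R(X) of degree less than Σ e_j d_j determined by a_1, ..., a_t. -/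
open scoped Classical ENNReal
open Polynomial

noncomputable section

namespace KH

lemma nat_sum_lt {q : ℕ} (hq : 1 ≤ q) (v : ℕ → ℕ) (k : ℕ) (hv : ∀ i < k, v i < q) :
    ∑ i ∈ Finset.range k, v i * q ^ i < q ^ k := by
  induction k with
  | zero => simpa using hq
  | succ k ih =>
    have h1 : ∑ i ∈ Finset.range k, v i * q ^ i < q ^ k :=
      ih fun i hi => hv i (hi.trans (Nat.lt_succ_self k))
    have h2 : v k < q := hv k (Nat.lt_succ_self k)
    rw [Finset.sum_range_succ, pow_succ]
    calc ∑ i ∈ Finset.range k, v i * q ^ i + v k * q ^ k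
        < q ^ k + v k * q ^ k := by omega
      _ = (v k + 1) * q ^ k := by ring
      _ ≤ q * q ^ k := Nat.mul_le_mul_right _ (by omega)
      _ = q ^ k * q := by ring

lemma nat_digit_extract {q : ℕ} (hq : 1 ≤ q) (v : ℕ → ℕ) (k : ℕ) (hv : ∀ i < k, v i < q)
    {j : ℕ} (hj : j < k) : (∑ i ∈ Finset.range k, v i * q ^ i) / q ^ j % q = v j := by
  obtain ⟨l, rfl⟩ : ∃ l, k = j + (l + 1) := ⟨k - j - 1, by omega⟩
  have hsplit : ∑ i ∈ Finset.range (j + (l+1)), v i * q ^ i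
      = (∑ i ∈ Finset.range j, v i * q ^ i)
        + q ^ j * ∑ i ∈ Finset.range (l+1), v (j + i) * q ^ i := by
    rw [Finset.sum_range_add, Finset.mul_sum]
    congr 1
    refine Finset.sum_congr rfl fun i _ => ?_
    rw [pow_add]; ring
  have hlow : (∑ i ∈ Finset.range j, v i * q ^ i) < q ^ j :=
    nat_sum_lt hq v j fun i hi => hv i (by omega)
  have hqj : 0 < q ^ j := Nat.pow_pos hq
  rw [hsplit, Nat.add_mul_div_left _ _ hqj, Nat.div_eq_of_lt hlow, Nat.zero_add]
  rw [Finset.sum_range_succ']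
  have hrw : ∑ x ∈ Finset.range l, v (j + (x + 1)) * q ^ (x + 1)
      = (∑ x ∈ Finset.range l, v (j + (x + 1)) * q ^ x) * q := by
    rw [Finset.sum_mul]
    refine Finset.sum_congr rfl fun i _ => ?_
    rw [pow_succ]; ring
  rw [hrw, add_comm, Nat.add_mul_mod_self_right, pow_zero, Nat.mul_one, Nat.add_zero,
    Nat.mod_eq_of_lt (hv j (by omega))]

lemma nat_mod_pow {q : ℕ} (hq : 2 ≤ q) (m k : ℕ) :
    ∑ i ∈ Finset.range k, (m / q ^ i % q) * q ^ i = m % q ^ k := by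
  induction k with
  | zero => simp [Nat.mod_one]
  | succ k ih =>
    rw [Finset.sum_range_succ, ih]
    have e1 : q * (m / q ^ (k+1)) + m / q ^ k % q = m / q ^ k := by
      rw [pow_succ, ← Nat.div_div_eq_div_mul]
      exact Nat.div_add_mod _ q
    have h1 : m = q ^ (k+1) * (m / q ^ (k+1)) + ((m / q ^ k % q) * q ^ k + m % q ^ k) := by
      have e2 : m = q ^ k * (m / q ^ k) + m % q ^ k := (Nat.div_add_mod m (q ^ k)).symm
      calc m = q ^ k * (m / q ^ k) + m % q ^ k := e2
        _ = q ^ k * (q * (m / q ^ (k+1)) + m / q ^ k % q) + m % q ^ k := by rw [e1]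
        _ = q ^ (k+1) * (m / q ^ (k+1)) + ((m / q ^ k % q) * q ^ k + m % q ^ k) := by ring
    have h2 : (m / q ^ k % q) * q ^ k + m % q ^ k < q ^ (k+1) := by
      have hd : m / q ^ k % q < q := Nat.mod_lt _ (show 0 < q by omega)
      have hqk : 0 < q ^ k := Nat.pow_pos (by omega)
      have hm : m % q ^ k < q ^ k := Nat.mod_lt _ hqk
      have hub : (m / q ^ k % q) * q ^ k ≤ (q - 1) * q ^ k := Nat.mul_le_mul_right _ (by omega)
      have hAC : (q - 1) * q ^ k + q ^ k = q ^ k * q := by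
        have hq1 : q - 1 + 1 = q := by omega
        calc (q - 1) * q ^ k + q ^ k = ((q - 1) + 1) * q ^ k := by ring
          _ = q ^ k * q := by rw [hq1]; ring
      rw [pow_succ]
      omega
    conv_rhs => rw [h1]
    rw [Nat.mul_add_mod, Nat.mod_eq_of_lt h2]
    ring



variable {p : ℕ} [Fact p.Prime]

lemma hp2 : 2 ≤ p := (Fact.out : p.Prime).two_le

lemma div_pow_eq_zero_of_lt {n i : ℕ} (hni : n < i) : n / p ^ i = 0 := by
  apply Nat.div_eq_of_lt
  calc n < 2 ^ i := lt_of_lt_of_le Nat.lt_two_pow_self (Nat.pow_le_pow_right (by norm_num) hni.le)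
    _ ≤ p ^ i := Nat.pow_le_pow_left hp2 i

lemma nPoly_coeff (n i : ℕ) : (nPoly p n).coeff i = ((n / p ^ i % p : ℕ) : ZMod p) := by
  rw [nPoly, Polynomial.finset_sum_coeff]
  simp only [Polynomial.coeff_C_mul, Polynomial.coeff_X_pow, mul_ite, mul_one, mul_zero]
  rw [Finset.sum_ite_eq (Finset.range (n+1)) i]
  split_ifs with h
  · rfl
  · rw [div_pow_eq_zero_of_lt (by simp at h; omega)]
    simp

lemma nPoly_degree_lt {m e : ℕ} (hm : m < p ^ e) : (nPoly p m).degree < (e : ℕ) := by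
  rw [Polynomial.degree_lt_iff_coeff_zero]
  intro i hi
  rw [nPoly_coeff, Nat.div_eq_of_lt (lt_of_lt_of_le hm (Nat.pow_le_pow_right
    (by have := hp2 (p := p); omega) hi))]
  simp

lemma nPoly_degree_lt_succ (n : ℕ) : (nPoly p n).degree < ((n + 1 : ℕ) : ℕ) := by
  rw [Polynomial.degree_lt_iff_coeff_zero]
  intro i hi
  rw [nPoly_coeff, div_pow_eq_zero_of_lt (by omega)]
  simp

lemma polyEvalNat_eq_sum {f : Polynomial (ZMod p)} {K : ℕ} (hK : f.natDegree < K) :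
    polyEvalNat p f = ∑ i ∈ Finset.range K, (f.coeff i).val * p ^ i := by
  rw [polyEvalNat]
  refine Finset.sum_subset (Finset.range_subset_range.2 (by omega)) fun i _ hi => ?_
  rw [Polynomial.coeff_eq_zero_of_natDegree_lt (by simp at hi; omega)]
  simp

lemma coeff_val_lt (a : ZMod p) : a.val < p := ZMod.val_lt a

lemma polyEvalNat_lt {f : Polynomial (ZMod p)} {e : ℕ} (he : 1 ≤ e)
    (hf : f.degree < (e : ℕ)) : polyEvalNat p f < p ^ e := by
  have hnd : f.natDegree < e := by
    rcases eq_or_ne f 0 with rfl | h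
    · simp only [Polynomial.natDegree_zero]; omega
    · exact Polynomial.natDegree_lt_iff_degree_lt h |>.2 hf
  rw [polyEvalNat_eq_sum hnd]
  exact nat_sum_lt (by have := hp2 (p := p); omega) _ e fun i _ => ZMod.val_lt _

lemma nPoly_polyEvalNat (f : Polynomial (ZMod p)) : nPoly p (polyEvalNat p f) = f := by
  set K := f.natDegree + 1 with hK
  have hsum : polyEvalNat p f = ∑ i ∈ Finset.range K, (f.coeff i).val * p ^ i := rfl
  have hlt : polyEvalNat p f < p ^ K := by
    rw [hsum]; exact nat_sum_lt (by have := hp2 (p := p); omega) _ K fun i _ => ZMod.val_lt _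
  ext i
  rw [nPoly_coeff]
  by_cases hi : i < K
  · rw [hsum, nat_digit_extract (by have := hp2 (p := p); omega) _ K
      (fun j _ => ZMod.val_lt _) hi]
    exact ZMod.natCast_rightInverse _
  · rw [Nat.div_eq_of_lt (lt_of_lt_of_le hlt (Nat.pow_le_pow_right
      (by have := hp2 (p := p); omega) (by omega)))]
    rw [Polynomial.coeff_eq_zero_of_natDegree_lt (by omega)]
    simp

lemma polyEvalNat_nPoly (m : ℕ) : polyEvalNat p (nPoly p m) = m := by
  set g := nPoly p m with hg
  set K := g.natDegree + 1 with hK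
  have hcoeff : ∀ i, (g.coeff i).val = m / p ^ i % p := by
    intro i
    rw [hg, nPoly_coeff, ZMod.val_cast_of_lt (Nat.mod_lt _ (by have := hp2 (p := p); omega))]
  have hsum : polyEvalNat p g = ∑ i ∈ Finset.range K, (m / p ^ i % p) * p ^ i := by
    rw [polyEvalNat]
    exact Finset.sum_congr rfl fun i _ => by rw [hcoeff]
  rw [hsum, nat_mod_pow hp2]
  rcases Nat.eq_zero_or_pos m with rfl | hm
  · simp
  have hlog : m / p ^ (Nat.log p m) % p ≠ 0 := by
    have h1 : p ^ Nat.log p m ≤ m := Nat.pow_log_le_self p (by omega)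
    have h2 : m < p ^ (Nat.log p m + 1) := Nat.lt_pow_succ_log_self (by have := hp2 (p:=p); omega) m
    have h3 : 1 ≤ m / p ^ (Nat.log p m) := (Nat.one_le_div_iff (Nat.pow_pos (by have := hp2 (p:=p); omega))).2 h1
    have h4 : m / p ^ (Nat.log p m) < p := by
      rw [Nat.div_lt_iff_lt_mul (Nat.pow_pos (by have := hp2 (p:=p); omega))]
      calc m < p ^ (Nat.log p m + 1) := h2
        _ = p * p ^ (Nat.log p m) := by ring
    rw [Nat.mod_eq_of_lt h4]; omega
  have hle : Nat.log p m ≤ g.natDegree := by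
    apply Polynomial.le_natDegree_of_ne_zero
    rw [hg, nPoly_coeff]
    intro hc
    apply hlog
    have := (ZMod.natCast_eq_zero_iff _ p).1 hc
    have hlt : m / p ^ (Nat.log p m) % p < p := Nat.mod_lt _ (by have := hp2 (p:=p); omega)
    exact Nat.eq_zero_of_dvd_of_lt this hlt
  have : m < p ^ K := by
    calc m < p ^ (Nat.log p m + 1) := Nat.lt_pow_succ_log_self (by have := hp2 (p:=p); omega) m
      _ ≤ p ^ K := Nat.pow_le_pow_right (by have := hp2 (p:=p); omega) (by omega)
  exact Nat.mod_eq_of_lt this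


variable {F : Type*} [Field F] {b : Polynomial F}

lemma divByMonic_pow_succ (hb : b.Monic) (f : Polynomial F) (i : ℕ) :
    f /ₘ b ^ (i + 1) = f /ₘ b /ₘ b ^ i := by
  have hbp : (b ^ (i+1)).Monic := hb.pow _
  have hbi : (b ^ i).Monic := hb.pow _
  refine (Polynomial.div_modByMonic_unique (f /ₘ b /ₘ b ^ i)
    (f %ₘ b + b * (f /ₘ b %ₘ b ^ i)) hbp ⟨?_, ?_⟩).1
  · calc f %ₘ b + b * (f /ₘ b %ₘ b ^ i) + b ^ (i+1) * (f /ₘ b /ₘ b ^ i)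
        = f %ₘ b + b * ((f /ₘ b %ₘ b ^ i) + b ^ i * (f /ₘ b /ₘ b ^ i)) := by ring
      _ = f %ₘ b + b * (f /ₘ b) := by rw [Polynomial.modByMonic_add_div _ (b ^ i)]
      _ = f := Polynomial.modByMonic_add_div _ b
  · have hdb : b.degree = (b.natDegree : ℕ) := Polynomial.degree_eq_natDegree hb.ne_zero
    have hdbp : (b ^ (i+1)).degree = (((i+1) * b.natDegree : ℕ) : WithBot ℕ) := by
      rw [Polynomial.degree_eq_natDegree hbp.ne_zero, hb.natDegree_pow]
    apply lt_of_le_of_lt (Polynomial.degree_add_le _ _)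
    rw [max_lt_iff]
    constructor
    · calc (f %ₘ b).degree < b.degree := Polynomial.degree_modByMonic_lt _ hb
        _ ≤ (b ^ (i+1)).degree := by
            rw [hdb, hdbp, Nat.cast_le]
            nlinarith [b.natDegree.zero_le]
    · rcases eq_or_ne (f /ₘ b %ₘ b ^ i) 0 with h0 | h0
      · rw [h0, mul_zero, Polynomial.degree_zero, hdbp]
        exact WithBot.bot_lt_coe _
      · rw [Polynomial.degree_mul]
        have h1 : (f /ₘ b %ₘ b ^ i).degree < (b ^ i).degree := Polynomial.degree_modByMonic_lt _ hbi
        calc b.degree + (f /ₘ b %ₘ b ^ i).degree < b.degree + (b ^ i).degree := by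
              exact WithBot.add_lt_add_left (by rw [hdb]; exact WithBot.coe_ne_bot) h1
          _ = (b * b ^ i).degree := (Polynomial.degree_mul).symm
          _ = (b ^ (i+1)).degree := by rw [← pow_succ']

lemma modByMonic_eq_iff_dvd_sub (hb : b.Monic) {f r : Polynomial F} (hr : r.degree < b.degree) :
    f %ₘ b = r ↔ b ∣ f - r := by
  rw [← Polynomial.modByMonic_eq_zero_iff_dvd hb, Polynomial.sub_modByMonic,
    (Polynomial.modByMonic_eq_self_iff hb).2 hr, sub_eq_zero]

lemma pow_dvd_iff_digits (hb : b.Monic) :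
    ∀ (d : ℕ) (f : Polynomial F) (r : ℕ → Polynomial F), (∀ i, (r i).degree < b.degree) →
    ((b ^ d ∣ f - ∑ i ∈ Finset.range d, r i * b ^ i) ↔ ∀ i < d, (f /ₘ b ^ i) %ₘ b = r i) := by
  intro d
  induction d with
  | zero => intro f r _; simp
  | succ d ih =>
    intro f r hr
    have hsum : ∑ i ∈ Finset.range (d+1), r i * b ^ i
        = r 0 + b * ∑ i ∈ Finset.range d, r (i+1) * b ^ i := by
      rw [Finset.sum_range_succ', Finset.mul_sum, add_comm]
      congr 1
      · simp
      · refine Finset.sum_congr rfl fun i _ => ?_; rw [pow_succ]; ring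
    set T := ∑ i ∈ Finset.range d, r (i+1) * b ^ i with hT
    have key : (b ^ (d+1) ∣ f - ∑ i ∈ Finset.range (d+1), r i * b ^ i) ↔
        (f %ₘ b = r 0 ∧ b ^ d ∣ (f /ₘ b) - T) := by
      constructor
      · intro h
        have hb0 : b ∣ f - r 0 := by
          have h1 : b ∣ f - (r 0 + b * T) :=
            dvd_trans (dvd_pow_self b (Nat.succ_ne_zero d)) (hsum ▸ h)
          have he : f - r 0 = (f - (r 0 + b * T)) + b * T := by ring
          rw [he]; exact dvd_add h1 (Dvd.intro _ rfl)
        have h0 : f %ₘ b = r 0 := (modByMonic_eq_iff_dvd_sub hb (hr 0)).2 hb0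
        refine ⟨h0, ?_⟩
        have heq : f - (r 0 + b * T) = b * ((f /ₘ b) - T) := by
          conv_lhs => rw [← Polynomial.modByMonic_add_div f b, h0]
          ring
        rw [hsum, heq, pow_succ'] at h
        exact (mul_dvd_mul_iff_left (hb.ne_zero)).1 h
      · rintro ⟨h0, h1⟩
        rw [hsum]
        have heq : f - (r 0 + b * T) = b * ((f /ₘ b) - T) := by
          conv_lhs => rw [← Polynomial.modByMonic_add_div f b, h0]
          ring
        rw [heq, pow_succ']
        exact mul_dvd_mul_left b h1
    rw [key, ih (f /ₘ b) (fun i => r (i+1)) (fun i => hr (i+1))]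
    constructor
    · rintro ⟨h0, h1⟩ i hi
      cases i with
      | zero => simpa [pow_zero, Polynomial.divByMonic_one] using h0
      | succ i => rw [divByMonic_pow_succ hb]; exact h1 i (by omega)
    · intro h
      refine ⟨by simpa [Polynomial.divByMonic_one] using h 0 (by omega), fun i hi => ?_⟩
      rw [← divByMonic_pow_succ hb]
      exact h (i+1) (by omega)


section VDC
variable {p : ℕ} [Fact p.Prime]

lemma polyEvalNat_zero : polyEvalNat p (0 : Polynomial (ZMod p)) = 0 := by
  simp [polyEvalNat]

variable {b : Polynomial (ZMod p)} (hb : b.Monic)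
include hb

lemma haltonDigit_degree_lt (n i : ℕ) :
    (haltonDigit p b n i).degree < (b.natDegree : ℕ) := by
  rw [← Polynomial.degree_eq_natDegree hb.ne_zero]
  exact Polynomial.degree_modByMonic_lt _ hb

lemma haltonDigit_lt (he : 1 ≤ b.natDegree) (n i : ℕ) :
    polyEvalNat p (haltonDigit p b n i) < p ^ b.natDegree :=
  polyEvalNat_lt he (haltonDigit_degree_lt hb n i)

lemma haltonDigit_eq_zero (he : 1 ≤ b.natDegree) {n i : ℕ} (hi : n + 1 ≤ i) :
    haltonDigit p b n i = 0 := by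
  have h1 : (nPoly p n).degree < ((b ^ i).natDegree : ℕ) := by
    refine lt_of_lt_of_le (nPoly_degree_lt_succ n) ?_
    rw [Nat.cast_le, hb.natDegree_pow]
    calc n + 1 ≤ i := hi
      _ ≤ i * b.natDegree := Nat.le_mul_of_pos_right _ (by omega)
  have h2 : nPoly p n /ₘ b ^ i = 0 := by
    rw [Polynomial.divByMonic_eq_zero_iff (hb.pow i)]
    rwa [← Polynomial.degree_eq_natDegree (hb.pow i).ne_zero] at h1
  rw [haltonDigit, h2, Polynomial.zero_modByMonic]

lemma vdc_eq_sum (he : 1 ≤ b.natDegree) (n : ℕ) {M : ℕ} (hM : n + 1 ≤ M) :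
    vdc p b n = ∑ i ∈ Finset.range M,
      (polyEvalNat p (haltonDigit p b n i) : ℝ) / (p : ℝ) ^ (b.natDegree * (i + 1)) := by
  refine tsum_eq_sum fun i hi => ?_
  rw [haltonDigit_eq_zero hb he (by simp at hi; omega), polyEvalNat_zero]
  simp

lemma vdc_mem_iff (he : 1 ≤ b.natDegree) (d a n : ℕ) (ha : a < p ^ (b.natDegree * d)) :
    ((a : ℝ) / (p:ℝ) ^ (b.natDegree * d) ≤ vdc p b n ∧
      vdc p b n < ((a:ℝ)+1) / (p:ℝ) ^ (b.natDegree * d))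
    ↔ ∀ i < d, haltonDigit p b n i
        = nPoly p (a / p ^ (b.natDegree * (d - 1 - i)) % p ^ b.natDegree) := by
  have hp : 2 ≤ p := hp2
  have hq2 : 2 ≤ p ^ b.natDegree := le_trans hp (Nat.le_self_pow (by omega) p)
  have hclt : ∀ i, polyEvalNat p (haltonDigit p b n i) < p ^ b.natDegree :=
    fun i => haltonDigit_lt hb he n i
  have hx1 : (1:ℝ) < (p:ℝ) := by exact_mod_cast hp
  have hx0 : (0:ℝ) < (p:ℝ) := by linarith
  have hpow : ∀ k : ℕ, (0:ℝ) < (p:ℝ) ^ k := fun k => pow_pos hx0 k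
  have hqpow : ∀ j : ℕ, (p ^ b.natDegree) ^ j = p ^ (b.natDegree * j) :=
    fun j => (pow_mul p _ j).symm
  have hlow : ((∑ i ∈ Finset.range d,
        polyEvalNat p (haltonDigit p b n i) * p ^ (b.natDegree * (d - 1 - i)) : ℕ) : ℝ)
          / (p:ℝ) ^ (b.natDegree * d)
      = ∑ i ∈ Finset.range d,
          (polyEvalNat p (haltonDigit p b n i) : ℝ) / (p:ℝ) ^ (b.natDegree * (i+1)) := by
    push_cast
    rw [Finset.sum_div]
    refine Finset.sum_congr rfl fun i hi => ?_
    simp only [Finset.mem_range] at hi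
    rw [div_eq_div_iff (ne_of_gt (hpow _)) (ne_of_gt (hpow _)), mul_assoc, ← pow_add]
    congr 2
    rw [← Nat.mul_add]
    congr 1
    omega
  have hTbound : ∀ K : ℕ, d ≤ K →
      ∑ i ∈ Finset.Ico d K,
          (polyEvalNat p (haltonDigit p b n i) : ℝ) / (p:ℝ) ^ (b.natDegree * (i+1))
        ≤ 1 / (p:ℝ) ^ (b.natDegree * d) - 1 / (p:ℝ) ^ (b.natDegree * K) := by
    intro K hK
    induction K, hK using Nat.le_induction with
    | base => simp
    | succ K hK ih =>
      rw [Finset.sum_Ico_succ_top hK]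
      have hq' : ((p ^ b.natDegree : ℕ):ℝ) / (p:ℝ) ^ (b.natDegree * (K+1))
          = 1 / (p:ℝ) ^ (b.natDegree * K) := by
        push_cast
        rw [show b.natDegree * (K+1) = b.natDegree * K + b.natDegree by ring, pow_add]
        rw [div_eq_div_iff (by positivity) (ne_of_gt (hpow _))]
        ring
      have hcK : (polyEvalNat p (haltonDigit p b n K) : ℝ) ≤ ((p ^ b.natDegree : ℕ):ℝ) - 1 := by
        have h := hclt K
        have h' : (polyEvalNat p (haltonDigit p b n K) : ℝ) + 1 ≤ ((p ^ b.natDegree : ℕ) : ℝ) := by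
          exact_mod_cast h
        linarith
      have hstep : (polyEvalNat p (haltonDigit p b n K) : ℝ) / (p:ℝ) ^ (b.natDegree * (K+1))
          ≤ 1 / (p:ℝ) ^ (b.natDegree * K) - 1 / (p:ℝ) ^ (b.natDegree * (K+1)) := by
        rw [← hq', ← sub_div]
        rw [div_le_div_iff_of_pos_right (hpow _)]
        exact hcK
      calc _ ≤ (1 / (p:ℝ) ^ (b.natDegree * d) - 1 / (p:ℝ) ^ (b.natDegree * K))
            + (polyEvalNat p (haltonDigit p b n K) : ℝ) / (p:ℝ) ^ (b.natDegree * (K+1)) := by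
              linarith
        _ ≤ _ := by linarith
  have hT0 : 0 ≤ ∑ i ∈ Finset.Ico d (n+1+d),
      (polyEvalNat p (haltonDigit p b n i) : ℝ) / (p:ℝ) ^ (b.natDegree * (i+1)) :=
    Finset.sum_nonneg fun i _ => div_nonneg (by positivity) (le_of_lt (hpow _))
  have hT1 : ∑ i ∈ Finset.Ico d (n+1+d),
      (polyEvalNat p (haltonDigit p b n i) : ℝ) / (p:ℝ) ^ (b.natDegree * (i+1))
        < 1 / (p:ℝ) ^ (b.natDegree * d) := by
    have h := hTbound (n+1+d) (by omega)
    have h2 : 0 < 1 / (p:ℝ) ^ (b.natDegree * (n+1+d)) := by positivity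
    linarith
  have hsum : vdc p b n
      = ((∑ i ∈ Finset.range d,
            polyEvalNat p (haltonDigit p b n i) * p ^ (b.natDegree * (d - 1 - i)) : ℕ) : ℝ)
          / (p:ℝ) ^ (b.natDegree * d)
        + ∑ i ∈ Finset.Ico d (n+1+d),
            (polyEvalNat p (haltonDigit p b n i) : ℝ) / (p:ℝ) ^ (b.natDegree * (i+1)) := by
    rw [vdc_eq_sum hb he n (show n + 1 ≤ n+1+d by omega), hlow]
    rw [Finset.range_eq_Ico,
      ← Finset.sum_Ico_consecutive _ (Nat.zero_le d) (show d ≤ n+1+d by omega),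
      ← Finset.range_eq_Ico]
  have h1 : ((∑ i ∈ Finset.range d,
        polyEvalNat p (haltonDigit p b n i) * p ^ (b.natDegree * (d - 1 - i)) : ℕ) : ℝ)
          / (p:ℝ) ^ (b.natDegree * d) ≤ vdc p b n := by
    rw [hsum]; linarith
  have h2 : vdc p b n < (((∑ i ∈ Finset.range d,
        polyEvalNat p (haltonDigit p b n i) * p ^ (b.natDegree * (d - 1 - i)) : ℕ) : ℝ) + 1)
          / (p:ℝ) ^ (b.natDegree * d) := by
    rw [hsum, add_div]
    linarith
  have hiff1 : ((a : ℝ) / (p:ℝ) ^ (b.natDegree * d) ≤ vdc p b n ∧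
      vdc p b n < ((a:ℝ)+1) / (p:ℝ) ^ (b.natDegree * d)) ↔
      a = ∑ i ∈ Finset.range d,
        polyEvalNat p (haltonDigit p b n i) * p ^ (b.natDegree * (d - 1 - i)) := by
    constructor
    · rintro ⟨ha1, ha2⟩
      have hlt1 := lt_of_le_of_lt ha1 h2
      have hlt2 := lt_of_le_of_lt h1 ha2
      rw [div_lt_div_iff_of_pos_right (hpow _)] at hlt1 hlt2
      have e1 : a < (∑ i ∈ Finset.range d,
        polyEvalNat p (haltonDigit p b n i) * p ^ (b.natDegree * (d - 1 - i))) + 1 := by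
        exact_mod_cast hlt1
      have e2 : (∑ i ∈ Finset.range d,
        polyEvalNat p (haltonDigit p b n i) * p ^ (b.natDegree * (d - 1 - i))) < a + 1 := by
        exact_mod_cast hlt2
      omega
    · intro hEq
      rw [← hEq] at h1 h2
      exact ⟨h1, h2⟩
  rw [hiff1]
  -- now pure arithmetic over ℕ, in base q = p ^ b.natDegree
  have hAq : ∑ i ∈ Finset.range d,
        polyEvalNat p (haltonDigit p b n i) * p ^ (b.natDegree * (d - 1 - i))
      = ∑ j ∈ Finset.range d,
        polyEvalNat p (haltonDigit p b n (d - 1 - j)) * (p ^ b.natDegree) ^ j := by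
    rw [← Finset.sum_range_reflect]
    refine Finset.sum_congr rfl fun j hj => ?_
    simp only [Finset.mem_range] at hj
    rw [hqpow]
    congr 3
    omega
  have ha' : a < (p ^ b.natDegree) ^ d := by rwa [hqpow]
  have hiff2 : (a = ∑ i ∈ Finset.range d,
        polyEvalNat p (haltonDigit p b n i) * p ^ (b.natDegree * (d - 1 - i)))
      ↔ ∀ i < d, polyEvalNat p (haltonDigit p b n i)
          = a / (p ^ b.natDegree) ^ (d - 1 - i) % p ^ b.natDegree := by
    constructor
    · intro hEq i hi
      rw [hEq, hAq]
      rw [nat_digit_extract (by omega) _ d (fun j _ => hclt _) (show d - 1 - i < d by omega)]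
      congr 2
      omega
    · intro h
      have hmod : a % (p ^ b.natDegree) ^ d = a := Nat.mod_eq_of_lt ha'
      rw [← hmod, ← nat_mod_pow hq2 a d, hAq]
      refine (Finset.sum_congr rfl fun j hj => ?_).symm
      simp only [Finset.mem_range] at hj
      have hjj : d - 1 - (d - 1 - j) = j := by omega
      rw [h (d - 1 - j) (by omega), hjj]
  rw [hiff2]
  constructor
  · intro h i hi
    have hii := h i hi
    rw [← hqpow (d - 1 - i), ← hii, nPoly_polyEvalNat]
  · intro h i hi
    rw [h i hi, polyEvalNat_nPoly, hqpow]

end VDC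



/-- For the Halton sequence in monic nonconstant pairwise coprime
polynomial bases `b_1, …, b_t` with `deg b_j = e_j`: the point `y_n` lies in
`∏_j [a_j/p^{e_j d_j}, (a_j+1)/p^{e_j d_j})` if and only if
`n(X) ≡ R(X) (mod ∏_j b_j^{d_j})` for a unique residue `R` of degree `< ∑ e_j d_j`
determined by the `a_j`. -/
theorem statement10 (p : ℕ) [Fact p.Prime] (t : ℕ)
    (b : Fin t → Polynomial (ZMod p))
    (hmonic : ∀ j, (b j).Monic) (hnc : ∀ j, 1 ≤ (b j).natDegree)
    (hcop : ∀ j j', j ≠ j' → IsCoprime (b j) (b j'))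
    (d : Fin t → ℕ) (a : Fin t → ℕ) (ha : ∀ j, a j < p ^ ((b j).natDegree * d j)) :
    ∃! R : Polynomial (ZMod p),
      R.degree < ((∑ j, (b j).natDegree * d j : ℕ) : ℕ) ∧
      ∀ n : ℕ,
        ((∀ j, (a j : ℝ) / (p : ℝ) ^ ((b j).natDegree * d j) ≤ vdc p (b j) n ∧
            vdc p (b j) n < ((a j : ℝ) + 1) / (p : ℝ) ^ ((b j).natDegree * d j))
          ↔ (∏ j, (b j) ^ (d j)) ∣ (nPoly p n - R)) := by
  classical
  have hp : 2 ≤ p := (Fact.out : p.Prime).two_le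
  set M : Fin t → Polynomial (ZMod p) := fun j => (b j) ^ (d j) with hMdef
  set Rj : Fin t → Polynomial (ZMod p) := fun j =>
    ∑ i ∈ Finset.range (d j),
      nPoly p (a j / p ^ ((b j).natDegree * (d j - 1 - i)) % p ^ (b j).natDegree) * (b j) ^ i
    with hRjdef
  have hrdeg : ∀ (j : Fin t) (i : ℕ),
      (nPoly p (a j / p ^ ((b j).natDegree * (d j - 1 - i)) % p ^ (b j).natDegree)).degree
        < (b j).degree := by
    intro j i
    rw [Polynomial.degree_eq_natDegree (hmonic j).ne_zero]
    refine nPoly_degree_lt (Nat.mod_lt _ ?_)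
    have := hnc j
    exact lt_of_lt_of_le (by omega) (Nat.le_self_pow (by omega) p)
  have hkey : ∀ (n : ℕ) (j : Fin t),
      ((a j : ℝ) / (p : ℝ) ^ ((b j).natDegree * d j) ≤ vdc p (b j) n ∧
            vdc p (b j) n < ((a j : ℝ) + 1) / (p : ℝ) ^ ((b j).natDegree * d j))
      ↔ M j ∣ nPoly p n - Rj j := by
    intro n j
    rw [vdc_mem_iff (hmonic j) (hnc j) (d j) (a j) n (ha j), hMdef, hRjdef]
    rw [pow_dvd_iff_digits (hmonic j) (d j) (nPoly p n) _ (fun i => hrdeg j i)]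
    exact Iff.rfl
  have hMcop : ∀ j j', j ≠ j' → IsCoprime (M j) (M j') := fun j j' hne => (hcop j j' hne).pow
  have hcrt : ∀ s : Finset (Fin t), ∃ R0, ∀ j ∈ s, M j ∣ R0 - Rj j := by
    intro s
    induction s using Finset.cons_induction with
    | empty => exact ⟨0, by simp⟩
    | cons j s hj ih =>
      obtain ⟨R0, hR0⟩ := ih
      have hco : IsCoprime (M j) (∏ i ∈ s, M i) :=
        IsCoprime.prod_right fun i hi => hMcop j i (by rintro rfl; exact hj hi)
      obtain ⟨u, v, huv⟩ := hco
      refine ⟨R0 * u * M j + Rj j * (v * ∏ i ∈ s, M i), ?_⟩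
      intro i hi
      rw [Finset.mem_cons] at hi
      rcases hi with rfl | hi
      · exact ⟨(R0 - Rj i) * u, by linear_combination Rj i * huv⟩
      · have hP : (∏ k ∈ s, M k) ∣ (R0 * u * M j + Rj j * (v * ∏ k ∈ s, M k)) - R0 :=
          ⟨(Rj j - R0) * v, by linear_combination R0 * huv⟩
        have h2 : M i ∣ (R0 * u * M j + Rj j * (v * ∏ k ∈ s, M k)) - R0 :=
          dvd_trans (Finset.dvd_prod_of_mem M hi) hP
        have h3 : M i ∣ R0 - Rj i := hR0 i hi
        have he : (R0 * u * M j + Rj j * (v * ∏ k ∈ s, M k)) - Rj i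
            = ((R0 * u * M j + Rj j * (v * ∏ k ∈ s, M k)) - R0) + (R0 - Rj i) := by ring
        rw [he]
        exact dvd_add h2 h3
  obtain ⟨R0, hR0⟩ := hcrt Finset.univ
  have hPmonic : (∏ j, M j).Monic := monic_prod_of_monic _ _ fun j _ => (hmonic j).pow _
  have hPnd : (∏ j, M j).natDegree = ∑ j, (b j).natDegree * d j := by
    rw [Polynomial.natDegree_prod _ _ (fun j _ => ((hmonic j).pow _).ne_zero)]
    exact Finset.sum_congr rfl fun j _ => by rw [(hmonic j).natDegree_pow]; ring
  have hPdeg : (∏ j, M j).degree = ((∑ j, (b j).natDegree * d j : ℕ) : WithBot ℕ) := by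
    rw [Polynomial.degree_eq_natDegree hPmonic.ne_zero, hPnd]
  set R := R0 %ₘ (∏ j, M j) with hRdef
  have hRdeg : R.degree < ((∑ j, (b j).natDegree * d j : ℕ) : WithBot ℕ) := by
    rw [← hPdeg]
    exact Polynomial.degree_modByMonic_lt R0 hPmonic
  have hdvdR : ∀ j, M j ∣ R - Rj j := by
    intro j
    have h1 : (∏ k, M k) ∣ R0 - R :=
      ⟨R0 /ₘ (∏ k, M k), by
        rw [hRdef]
        linear_combination -(Polynomial.modByMonic_add_div R0 (∏ j, M j))⟩
    have h2 : M j ∣ R0 - R := dvd_trans (Finset.dvd_prod_of_mem M (Finset.mem_univ j)) h1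
    have h3 : M j ∣ R0 - Rj j := hR0 j (Finset.mem_univ j)
    have he : R - Rj j = (R0 - Rj j) - (R0 - R) := by ring
    rw [he]
    exact dvd_sub h3 h2
  have hPiff : ∀ f : Polynomial (ZMod p), (∀ j, M j ∣ f - Rj j) ↔ (∏ j, M j) ∣ f - R := by
    intro f
    constructor
    · intro h
      refine Finset.prod_dvd_of_coprime (fun j _ j' hj' hne => hMcop j j' hne) fun j _ => ?_
      have he : f - R = (f - Rj j) - (R - Rj j) := by ring
      rw [he]
      exact dvd_sub (h j) (hdvdR j)
    · intro h j
      have h2 : M j ∣ f - R := dvd_trans (Finset.dvd_prod_of_mem M (Finset.mem_univ j)) h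
      have he : f - Rj j = (f - R) + (R - Rj j) := by ring
      rw [he]
      exact dvd_add h2 (hdvdR j)
  have hmain : ∀ n : ℕ,
      ((∀ j, (a j : ℝ) / (p : ℝ) ^ ((b j).natDegree * d j) ≤ vdc p (b j) n ∧
            vdc p (b j) n < ((a j : ℝ) + 1) / (p : ℝ) ^ ((b j).natDegree * d j))
          ↔ (∏ j, M j) ∣ (nPoly p n - R)) := by
    intro n
    rw [← hPiff (nPoly p n)]
    exact ⟨fun h j => (hkey n j).1 (h j), fun h j => (hkey n j).2 (h j)⟩
  refine ⟨R, ⟨hRdeg, hmain⟩, ?_⟩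
  rintro R' ⟨hR'deg, hR'⟩
  have hn0 : nPoly p (polyEvalNat p R) = R := nPoly_polyEvalNat R
  have hint := (hmain (polyEvalNat p R)).2 (by rw [hn0, sub_self]; exact dvd_zero _)
  have hdvd' : (∏ j, M j) ∣ R - R' := by
    have := (hR' (polyEvalNat p R)).1 hint
    rwa [hn0] at this
  have hdeg : (R - R').degree < (∏ j, M j).degree := by
    rw [hPdeg]
    exact lt_of_le_of_lt (Polynomial.degree_sub_le _ _) (max_lt hRdeg hR'deg)
  have hz := Polynomial.eq_zero_of_dvd_of_degree_lt hdvd' hdeg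
  exact (sub_eq_zero.mp hz).symm


end KH
end
end
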